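/- arXiv:1309.1485 — 3 statements merged into one kernel-verified Lean document; each statement's English description precedes it below -/
import Mathlib

section
/- Suppose x : ℝ → ℝⁿ satisfies ẋ(t) = A x(t) + E d(t), x(0) = 0, and suppose there exist a symmetric positive definite Q₁ and ρ₁ > 0 such that the block matrix [[Aᵀ Q₁ + Q₁ A, Q₁ E], [Eᵀ Q₁, −ρ₁ I]] is negative definite and [[Q₁, P₁^{1/2}], [P₁^{1/2}, ρ₁ I]] is positive definite (where P₁ is symmetric positive definite). Then sup_t (x(t)ᵀ P₁ x(t))^{1/2} ≤ ρ₁ ‖d‖_{L²}, i.e., the peak P₁-weighted norm of the state is bounded by ρ₁ times the L² norm of d. -/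
open Matrix MeasureTheory

/-- Euclidean norm of a vector. -/
noncomputable def euclEnorm {n : ℕ} (v : Fin n → ℝ) : ℝ := Real.sqrt (∑ i, v i ^ 2)

/-- L² norm of a signal on [0,∞). -/
noncomputable def l2norm {q : ℕ} (d : ℝ → Fin q → ℝ) : ℝ :=
  Real.sqrt (∫ t in Set.Ioi (0 : ℝ), euclEnorm (d t) ^ 2)

lemma enorm_nonneg' {m : ℕ} (v : Fin m → ℝ) : 0 ≤ euclEnorm v := Real.sqrt_nonneg _

lemma enorm_sq_eq {m : ℕ} (v : Fin m → ℝ) : euclEnorm v ^ 2 = v ⬝ᵥ v := by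
  rw [euclEnorm, Real.sq_sqrt (Finset.sum_nonneg fun i _ => sq_nonneg _)]
  simp [dotProduct, sq]

lemma abs_le_enorm {m : ℕ} (v : Fin m → ℝ) (i : Fin m) : |v i| ≤ euclEnorm v := by
  rw [euclEnorm, ← Real.sqrt_sq_eq_abs]
  exact Real.sqrt_le_sqrt
    (Finset.single_le_sum (fun j _ => sq_nonneg (v j)) (Finset.mem_univ i))

lemma dot_swap {a b : ℕ} (M : Matrix (Fin a) (Fin b) ℝ) (u : Fin a → ℝ) (v : Fin b → ℝ) :
    u ⬝ᵥ (M *ᵥ v) = (Mᵀ *ᵥ u) ⬝ᵥ v := by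
  rw [dotProduct_mulVec, mulVec_transpose]

set_option maxHeartbeats 1000000 in
theorem peak_norm_bound_lemma1 {n q : ℕ}
    (A : Matrix (Fin n) (Fin n) ℝ) (E : Matrix (Fin n) (Fin q) ℝ)
    (P₁ Q₁ sqrtP₁ : Matrix (Fin n) (Fin n) ℝ) (ρ₁ : ℝ)
    (hP₁ : P₁.PosDef) (hQ₁ : Q₁.PosDef) (hρ₁ : 0 < ρ₁)
    (hsqrt : sqrtP₁.PosDef ∧ sqrtP₁ * sqrtP₁ = P₁)
    (hLMI1 : (-(Matrix.fromBlocks (Aᵀ * Q₁ + Q₁ * A) (Q₁ * E)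
        (Eᵀ * Q₁) (-(ρ₁ • (1 : Matrix (Fin q) (Fin q) ℝ))))).PosDef)
    (hLMI2 : (Matrix.fromBlocks Q₁ sqrtP₁ sqrtP₁
        (ρ₁ • (1 : Matrix (Fin n) (Fin n) ℝ))).PosDef)
    (d : ℝ → Fin q → ℝ)
    (hd : IntegrableOn (fun t => euclEnorm (d t) ^ 2) (Set.Ioi (0 : ℝ)))
    (x : ℝ → Fin n → ℝ) (hx0 : x 0 = 0)
    (hx : ∀ t, HasDerivAt x (A.mulVec (x t) + E.mulVec (d t)) t) :
    ∀ t, 0 ≤ t →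
      Real.sqrt (dotProduct (x t) (P₁.mulVec (x t))) ≤ ρ₁ * l2norm d := by
  obtain ⟨hS, hSS⟩ := hsqrt
  have hStr : sqrtP₁ᵀ = sqrtP₁ := hS.isHermitian
  have hQtr : Q₁ᵀ = Q₁ := hQ₁.isHermitian
  -- key inequality from LMI1
  have key1 : ∀ (u : Fin n → ℝ) (v : Fin q → ℝ),
      u ⬝ᵥ ((Aᵀ * Q₁ + Q₁ * A) *ᵥ u) + u ⬝ᵥ ((Q₁ * E) *ᵥ v) + v ⬝ᵥ ((Eᵀ * Q₁) *ᵥ u)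
        ≤ ρ₁ * (v ⬝ᵥ v) := by
    intro u v
    have h := hLMI1.posSemidef.dotProduct_mulVec_nonneg (Sum.elim u v)
    rw [neg_mulVec, dotProduct_neg] at h
    rw [fromBlocks_mulVec] at h
    simp only [Sum.elim_comp_inl, Sum.elim_comp_inr, star_trivial] at h
    rw [sumElim_dotProduct_sumElim, dotProduct_add, dotProduct_add] at h
    have hv : v ⬝ᵥ ((-(ρ₁ • (1 : Matrix (Fin q) (Fin q) ℝ))) *ᵥ v) = -(ρ₁ * (v ⬝ᵥ v)) := by
      rw [neg_mulVec, dotProduct_neg, smul_mulVec, one_mulVec, dotProduct_smul]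
      simp [smul_eq_mul]
    rw [hv] at h
    linarith
  -- key inequality from LMI2 :  uᵀ P₁ u ≤ ρ₁ uᵀ Q₁ u
  have key2 : ∀ u : Fin n → ℝ, u ⬝ᵥ (P₁ *ᵥ u) ≤ ρ₁ * (u ⬝ᵥ (Q₁ *ᵥ u)) := by
    intro u
    set v : Fin n → ℝ := -(ρ₁⁻¹ • (sqrtP₁ *ᵥ u)) with hv
    have h := hLMI2.posSemidef.dotProduct_mulVec_nonneg (Sum.elim u v)
    rw [fromBlocks_mulVec] at h
    simp only [Sum.elim_comp_inl, Sum.elim_comp_inr, star_trivial] at h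
    rw [sumElim_dotProduct_sumElim, dotProduct_add, dotProduct_add] at h
    have e1 : u ⬝ᵥ (sqrtP₁ *ᵥ v) = -(ρ₁⁻¹ * (u ⬝ᵥ (P₁ *ᵥ u))) := by
      rw [hv, mulVec_neg, dotProduct_neg, mulVec_smul, dotProduct_smul, mulVec_mulVec, hSS]
      simp [smul_eq_mul]
    have e2 : v ⬝ᵥ (sqrtP₁ *ᵥ u) = -(ρ₁⁻¹ * (u ⬝ᵥ (P₁ *ᵥ u))) := by
      rw [hv, neg_dotProduct, smul_dotProduct, dot_swap, hStr, mulVec_mulVec, hSS]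
      rw [dotProduct_comm]
      simp [smul_eq_mul]
    have e3 : v ⬝ᵥ ((ρ₁ • (1 : Matrix (Fin n) (Fin n) ℝ)) *ᵥ v) = ρ₁⁻¹ * (u ⬝ᵥ (P₁ *ᵥ u)) := by
      rw [smul_mulVec, one_mulVec, dotProduct_smul, hv]
      have : (-(ρ₁⁻¹ • (sqrtP₁ *ᵥ u))) ⬝ᵥ (-(ρ₁⁻¹ • (sqrtP₁ *ᵥ u)))
          = ρ₁⁻¹ * ρ₁⁻¹ * ((sqrtP₁ *ᵥ u) ⬝ᵥ (sqrtP₁ *ᵥ u)) := by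
        rw [neg_dotProduct, dotProduct_neg, neg_neg, smul_dotProduct, dotProduct_smul]
        ring_nf
      rw [this]
      have hP : (sqrtP₁ *ᵥ u) ⬝ᵥ (sqrtP₁ *ᵥ u) = u ⬝ᵥ (P₁ *ᵥ u) := by
        rw [dotProduct_comm, dot_swap, hStr, mulVec_mulVec, hSS, dotProduct_comm]
      rw [hP]
      rw [smul_eq_mul, ← mul_assoc, ← mul_assoc, mul_inv_cancel₀ hρ₁.ne', one_mul]
    rw [e1, e2, e3] at h
    have h' : ρ₁⁻¹ * (u ⬝ᵥ (P₁ *ᵥ u)) ≤ u ⬝ᵥ (Q₁ *ᵥ u) := by linarith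
    have h'' := mul_le_mul_of_nonneg_left h' hρ₁.le
    rwa [← mul_assoc, mul_inv_cancel₀ hρ₁.ne', one_mul] at h''
  -- the derivative of the Lyapunov function
  set x' : ℝ → Fin n → ℝ := fun s => A *ᵥ x s + E *ᵥ d s with hx'def
  have hcomp : ∀ (s : ℝ) (i : Fin n), HasDerivAt (fun τ => x τ i) (x' s i) s :=
    fun s i => hasDerivAt_pi.mp (hx s) i
  have hV : ∀ s : ℝ, HasDerivAt (fun τ => x τ ⬝ᵥ (Q₁ *ᵥ x τ))
      (x' s ⬝ᵥ (Q₁ *ᵥ x s) + x s ⬝ᵥ (Q₁ *ᵥ x' s)) s := by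
    intro s
    have heq : (fun τ => x τ ⬝ᵥ (Q₁ *ᵥ x τ))
        = fun τ => ∑ i, ∑ j, x τ i * (Q₁ i j * x τ j) := by
      funext τ
      simp [dotProduct, Matrix.mulVec, Finset.mul_sum]
    have heq2 : x' s ⬝ᵥ (Q₁ *ᵥ x s) + x s ⬝ᵥ (Q₁ *ᵥ x' s)
        = ∑ i, ∑ j, (x' s i * (Q₁ i j * x s j) + x s i * (Q₁ i j * x' s j)) := by
      simp [dotProduct, Matrix.mulVec, Finset.mul_sum, Finset.sum_add_distrib]
    rw [heq, heq2]
    apply HasDerivAt.fun_sum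
    intro i _
    apply HasDerivAt.fun_sum
    intro j _
    exact (hcomp s i).mul ((hcomp s j).const_mul (Q₁ i j))
  -- pointwise bound on the derivative
  have hVle : ∀ s : ℝ, x' s ⬝ᵥ (Q₁ *ᵥ x s) + x s ⬝ᵥ (Q₁ *ᵥ x' s)
      ≤ ρ₁ * euclEnorm (d s) ^ 2 := by
    intro s
    set u := x s
    set v := d s
    have hexp : x' s ⬝ᵥ (Q₁ *ᵥ x s) + x s ⬝ᵥ (Q₁ *ᵥ x' s)
        = u ⬝ᵥ ((Aᵀ * Q₁ + Q₁ * A) *ᵥ u) + u ⬝ᵥ ((Q₁ * E) *ᵥ v) + v ⬝ᵥ ((Eᵀ * Q₁) *ᵥ u) := by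
      have hx's : x' s = A *ᵥ u + E *ᵥ v := rfl
      rw [hx's, add_dotProduct, mulVec_add, dotProduct_add]
      have t1 : (A *ᵥ u) ⬝ᵥ (Q₁ *ᵥ u) = u ⬝ᵥ ((Aᵀ * Q₁) *ᵥ u) := by
        have h' := dot_swap Aᵀ u (Q₁ *ᵥ u)
        rw [transpose_transpose] at h'
        rw [← h', mulVec_mulVec]
      have t2 : (E *ᵥ v) ⬝ᵥ (Q₁ *ᵥ u) = v ⬝ᵥ ((Eᵀ * Q₁) *ᵥ u) := by
        have h' := dot_swap Eᵀ v (Q₁ *ᵥ u)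
        rw [transpose_transpose] at h'
        rw [← h', mulVec_mulVec]
      have t3 : u ⬝ᵥ (Q₁ *ᵥ (A *ᵥ u)) = u ⬝ᵥ ((Q₁ * A) *ᵥ u) := by rw [mulVec_mulVec]
      have t4 : u ⬝ᵥ (Q₁ *ᵥ (E *ᵥ v)) = u ⬝ᵥ ((Q₁ * E) *ᵥ v) := by rw [mulVec_mulVec]
      rw [t1, t2, t3, t4, add_mulVec, dotProduct_add]
      ring
    rw [hexp, enorm_sq_eq]
    exact key1 u v
  -- continuity of x
  have hxc : Continuous x := continuous_iff_continuousAt.mpr fun s => (hx s).continuousAt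
  have hxci : ∀ i, Continuous fun s => x s i := fun i => (continuous_apply i).comp hxc
  have hAxc : Continuous fun s => A *ᵥ x s := by
    apply continuous_pi
    intro i
    simp only [Matrix.mulVec, dotProduct]
    exact continuous_finset_sum _ fun j _ => (continuous_const.mul (hxci j))
  -- measurability of E *ᵥ d
  set uE : ℝ → Fin n → ℝ := fun s => E *ᵥ d s with huEdef
  have huE_eq : uE = fun s => deriv x s - A *ᵥ x s := by
    funext s
    rw [(hx s).deriv]
    simp [huEdef]
  have huE_meas : Measurable uE := by
    rw [huE_eq]
    exact (measurable_deriv x).sub hAxc.measurable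
  intro t ht
  -- integrability of enorm (d s)^2 on (0, t]
  have hdIoc : IntegrableOn (fun s => euclEnorm (d s) ^ 2) (Set.Ioc 0 t) :=
    hd.mono_set Set.Ioc_subset_Ioi_self
  have hdInt : IntervalIntegrable (fun s => euclEnorm (d s) ^ 2) volume 0 t := by
    rw [intervalIntegrable_iff_integrableOn_Ioc_of_le ht]
    exact hdIoc
  -- integrability of components of uE
  have huEi : ∀ i, IntervalIntegrable (fun s => uE s i) volume 0 t := by
    intro i
    rw [intervalIntegrable_iff_integrableOn_Ioc_of_le ht]
    have hbound : IntegrableOn (fun s => (∑ j, |E i j|) * (1 + euclEnorm (d s) ^ 2))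
        (Set.Ioc 0 t) := by
      apply Integrable.const_mul
      exact (integrableOn_const measure_Ioc_lt_top.ne).add hdIoc
    apply Integrable.mono' hbound
    · exact ((measurable_pi_apply i).comp huE_meas).aestronglyMeasurable
    · filter_upwards with s
      have h1 : |uE s i| ≤ (∑ j, |E i j|) * euclEnorm (d s) := by
        have : uE s i = ∑ j, E i j * d s j := rfl
        rw [this, Finset.sum_mul]
        refine (Finset.abs_sum_le_sum_abs _ _).trans (Finset.sum_le_sum fun j _ => ?_)
        rw [abs_mul]
        exact mul_le_mul_of_nonneg_left (abs_le_enorm _ j) (abs_nonneg _)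
      have h2 : euclEnorm (d s) ≤ 1 + euclEnorm (d s) ^ 2 := by
        nlinarith [enorm_nonneg' (d s)]
      have h3 : (0:ℝ) ≤ ∑ j, |E i j| := Finset.sum_nonneg fun j _ => abs_nonneg _
      calc ‖uE s i‖ = |uE s i| := rfl
        _ ≤ (∑ j, |E i j|) * euclEnorm (d s) := h1
        _ ≤ (∑ j, |E i j|) * (1 + euclEnorm (d s) ^ 2) := mul_le_mul_of_nonneg_left h2 h3
  -- interval integrability of the derivative
  set c : ℝ → Fin n → ℝ := fun s => Q₁ *ᵥ x s + Q₁ᵀ *ᵥ x s with hcdef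
  have hcc : ∀ i, Continuous fun s => c s i := by
    intro i
    simp only [hcdef, Pi.add_apply, Matrix.mulVec, dotProduct]
    exact (continuous_finset_sum _ fun j _ => (continuous_const.mul (hxci j))).add
      (continuous_finset_sum _ fun j _ => (continuous_const.mul (hxci j)))
  have hVd_eq : ∀ s, x' s ⬝ᵥ (Q₁ *ᵥ x s) + x s ⬝ᵥ (Q₁ *ᵥ x' s)
      = (A *ᵥ x s) ⬝ᵥ c s + ∑ i, uE s i * c s i := by
    intro s
    have h1 : x s ⬝ᵥ (Q₁ *ᵥ x' s) = x' s ⬝ᵥ (Q₁ᵀ *ᵥ x s) := by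
      rw [dot_swap, dotProduct_comm]
    have h2 : x' s ⬝ᵥ (Q₁ *ᵥ x s) + x' s ⬝ᵥ (Q₁ᵀ *ᵥ x s) = x' s ⬝ᵥ c s := by
      rw [hcdef, dotProduct_add]
    have h3 : x' s ⬝ᵥ c s = (A *ᵥ x s) ⬝ᵥ c s + uE s ⬝ᵥ c s := by
      rw [hx'def]
      exact add_dotProduct _ _ _
    have h4 : uE s ⬝ᵥ c s = ∑ i, uE s i * c s i := rfl
    rw [h1, h2, h3, h4]
  have hVd_int : IntervalIntegrable
      (fun s => x' s ⬝ᵥ (Q₁ *ᵥ x s) + x s ⬝ᵥ (Q₁ *ᵥ x' s)) volume 0 t := by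
    have : (fun s => x' s ⬝ᵥ (Q₁ *ᵥ x s) + x s ⬝ᵥ (Q₁ *ᵥ x' s))
        = fun s => (A *ᵥ x s) ⬝ᵥ c s + ∑ i, uE s i * c s i := funext hVd_eq
    rw [this]
    apply IntervalIntegrable.add
    · apply Continuous.intervalIntegrable
      simp only [dotProduct]
      exact continuous_finset_sum _ fun i _ =>
        ((continuous_apply i).comp hAxc).mul (hcc i)
    · have h5 : (fun s => ∑ i, uE s i * c s i)
          = ∑ i : Fin n, (fun s => uE s i * c s i) := by
        funext s
        simp [Finset.sum_apply]
      rw [h5]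
      exact IntervalIntegrable.sum _ fun i _ =>
        (huEi i).mul_continuousOn (hcc i).continuousOn
  -- fundamental theorem of calculus
  have hftc : ∫ s in (0:ℝ)..t, (x' s ⬝ᵥ (Q₁ *ᵥ x s) + x s ⬝ᵥ (Q₁ *ᵥ x' s))
      = x t ⬝ᵥ (Q₁ *ᵥ x t) - x 0 ⬝ᵥ (Q₁ *ᵥ x 0) :=
    intervalIntegral.integral_eq_sub_of_hasDerivAt (fun s _ => hV s) hVd_int
  have hV0 : x 0 ⬝ᵥ (Q₁ *ᵥ x 0) = 0 := by rw [hx0]; simp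
  -- compare with ρ₁ ∫ enorm²
  have hmono : ∫ s in (0:ℝ)..t, (x' s ⬝ᵥ (Q₁ *ᵥ x s) + x s ⬝ᵥ (Q₁ *ᵥ x' s))
      ≤ ∫ s in (0:ℝ)..t, ρ₁ * euclEnorm (d s) ^ 2 :=
    intervalIntegral.integral_mono_on ht hVd_int (hdInt.const_mul ρ₁) fun s _ => hVle s
  set I : ℝ := ∫ s in Set.Ioi (0:ℝ), euclEnorm (d s) ^ 2 with hIdef
  have hI0 : 0 ≤ I := setIntegral_nonneg measurableSet_Ioi fun s _ => by positivity
  have hIoc_le : ∫ s in Set.Ioc 0 t, euclEnorm (d s) ^ 2 ≤ I := by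
    apply setIntegral_mono_set hd
    · filter_upwards with s
      positivity
    · exact HasSubset.Subset.eventuallyLE Set.Ioc_subset_Ioi_self
  have hint_eq : ∫ s in (0:ℝ)..t, ρ₁ * euclEnorm (d s) ^ 2
      = ρ₁ * ∫ s in Set.Ioc 0 t, euclEnorm (d s) ^ 2 := by
    rw [intervalIntegral.integral_const_mul, intervalIntegral.integral_of_le ht]
  have hVt : x t ⬝ᵥ (Q₁ *ᵥ x t) ≤ ρ₁ * I := by
    have h1 : x t ⬝ᵥ (Q₁ *ᵥ x t) = ∫ s in (0:ℝ)..t,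
        (x' s ⬝ᵥ (Q₁ *ᵥ x s) + x s ⬝ᵥ (Q₁ *ᵥ x' s)) := by
      rw [hftc, hV0, sub_zero]
    rw [h1]
    calc _ ≤ ∫ s in (0:ℝ)..t, ρ₁ * euclEnorm (d s) ^ 2 := hmono
      _ = ρ₁ * ∫ s in Set.Ioc 0 t, euclEnorm (d s) ^ 2 := hint_eq
      _ ≤ ρ₁ * I := mul_le_mul_of_nonneg_left hIoc_le hρ₁.le
  -- conclude
  have hPle : x t ⬝ᵥ (P₁ *ᵥ x t) ≤ ρ₁ ^ 2 * I := by
    calc x t ⬝ᵥ (P₁ *ᵥ x t) ≤ ρ₁ * (x t ⬝ᵥ (Q₁ *ᵥ x t)) := key2 (x t)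
      _ ≤ ρ₁ * (ρ₁ * I) := mul_le_mul_of_nonneg_left hVt hρ₁.le
      _ = ρ₁ ^ 2 * I := by ring
  have := Real.sqrt_le_sqrt hPle
  refine this.trans ?_
  rw [show ρ₁ ^ 2 * I = (ρ₁ * Real.sqrt I) ^ 2 by
    rw [mul_pow, Real.sq_sqrt hI0]]
  rw [Real.sqrt_sq (by positivity)]
  rfl
end

section
/- In the sliding-mode observer error dynamics ė₁ = A₁₁ e₁, ė_y = A₂₁ e₁ + A₂₂ˢ e_y + ν − D₂ f̄, suppose a sliding motion occurs: e_y(t) = 0 and ė_y(t) = 0 for all t ≥ t₀. Then for t ≥ t₀, ν(t) = D₂ f̄(t) − A₂₁ e₁(t); in addition, if A₁₁ is Hurwitz, then e₁(t) → 0 and hence ν(t) − D₂ f̄(t) → 0 as t → ∞. -/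
open Matrix Filter NormedSpace

attribute [local instance] Matrix.linftyOpNormedRing Matrix.linftyOpNormedAlgebra

/-- `mulVec` at a fixed vector, as a real continuous linear map in the matrix. -/
noncomputable def mulVecCLM {n : ℕ} (w : Fin n → ℂ) :
    Matrix (Fin n) (Fin n) ℂ →L[ℝ] (Fin n → ℂ) :=
  LinearMap.toContinuousLinearMap
    { toFun := fun M => M.mulVec w
      map_add' := fun M N => Matrix.add_mulVec M N w
      map_smul' := fun r M => Matrix.smul_mulVec r M w }

@[simp] lemma mulVecCLM_apply {n : ℕ} (w : Fin n → ℂ) (M) : mulVecCLM w M = M.mulVec w := rfl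

lemma tendsto_pow_mul_exp_re_neg {c : ℝ} (hc : c < 0) (j : ℕ) :
    Tendsto (fun t : ℝ => t ^ j * Real.exp (c * t)) atTop (nhds 0) := by
  have hc0 : (0:ℝ) < -c := by linarith
  have h1 : Tendsto (fun t : ℝ => -c * t) atTop atTop :=
    Tendsto.const_mul_atTop hc0 tendsto_id
  have h2 := (Real.tendsto_pow_mul_exp_neg_atTop_nhds_zero j).comp h1
  have h4 := h2.const_mul (((-c) ^ j)⁻¹)
  rw [mul_zero] at h4
  refine h4.congr (fun t => ?_)
  have hne : (-c) ^ j ≠ 0 := pow_ne_zero _ (by linarith)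
  have : Real.exp (-(-c * t)) = Real.exp (c * t) := by ring_nf
  simp only [Function.comp, mul_pow, this]
  field_simp

/-- Exponential of a scalar matrix. -/
lemma exp_smul_one {n : ℕ} (c : ℂ) :
    exp (c • (1 : Matrix (Fin n) (Fin n) ℂ)) = Complex.exp c • 1 := by
  have hcont : Continuous ⇑((Algebra.ofId ℂ (Matrix (Fin n) (Fin n) ℂ)).restrictScalars ℝ) := by
    show Continuous fun c : ℂ => algebraMap ℂ (Matrix (Fin n) (Fin n) ℂ) c
    exact continuous_algebraMap _ _
  have h := map_exp ((Algebra.ofId ℂ (Matrix (Fin n) (Fin n) ℂ)).restrictScalars ℝ) hcont c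
  have hφ : ∀ z : ℂ, ((Algebra.ofId ℂ (Matrix (Fin n) (Fin n) ℂ)).restrictScalars ℝ) z
      = z • (1 : Matrix (Fin n) (Fin n) ℂ) := by
    intro z
    show algebraMap ℂ (Matrix (Fin n) (Fin n) ℂ) z = z • 1
    rw [Algebra.algebraMap_eq_smul_one]
  have hexpc : exp c = Complex.exp c := by
    rw [← Complex.exp_eq_exp_ℂ]
  rw [hφ, hφ, hexpc] at h
  exact h.symm

/-- Decay of the matrix exponential on a generalized eigenvector with `re μ < 0`. -/
lemma tendsto_expMat_mulVec_genEig {n : ℕ} (B : Matrix (Fin n) (Fin n) ℂ) {μ : ℂ}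
    (hμ : μ.re < 0) {w : Fin n → ℂ}
    (hw : w ∈ Module.End.maxGenEigenspace (Matrix.toLinAlgEquiv' B) μ) :
    Tendsto (fun t : ℝ => (exp (t • B)).mulVec w) atTop (nhds 0) := by
  obtain ⟨k, hk⟩ := (Module.End.mem_maxGenEigenspace _ _ _).mp hw
  set N : Matrix (Fin n) (Fin n) ℂ := B - μ • 1 with hN
  have hφN : Matrix.toLinAlgEquiv' (N ^ k) w = 0 := by
    rw [map_pow]
    have h1 : Matrix.toLinAlgEquiv' N
        = Matrix.toLinAlgEquiv' B - μ • (1 : Module.End ℂ (Fin n → ℂ)) := by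
      rw [hN, map_sub, _root_.map_smul, _root_.map_one]
    rw [h1]
    exact hk
  have hNk : (N ^ k).mulVec w = 0 := by
    rw [← Matrix.toLinAlgEquiv'_apply]
    exact hφN
  have hNj : ∀ j, k ≤ j → (N ^ j).mulVec w = 0 := by
    intro j hj
    rw [← Nat.sub_add_cancel hj, pow_add, ← Matrix.mulVec_mulVec, hNk, Matrix.mulVec_zero]
  have hsplit : ∀ t : ℝ, (exp (t • B)).mulVec w
      = ∑ j ∈ Finset.range k,
          Complex.exp ((t:ℂ) * μ) • (((j.factorial : ℝ))⁻¹ • t ^ j • (N ^ j).mulVec w) := by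
    intro t
    have hBsum : t • B = ((t:ℂ) * μ) • (1 : Matrix (Fin n) (Fin n) ℂ) + t • N := by
      have h1 : t • (μ • (1 : Matrix (Fin n) (Fin n) ℂ)) = ((t:ℂ) * μ) • 1 := by
        rw [← smul_assoc]
        congr 1
      rw [hN, smul_sub, h1]
      abel
    have hcomm : Commute (((t:ℂ) * μ) • (1 : Matrix (Fin n) (Fin n) ℂ)) (t • N) :=
      ((Commute.one_left (t • N)).smul_left _)
    rw [hBsum, Matrix.exp_add_of_commute _ _ hcomm, exp_smul_one, smul_mul_assoc, one_mul,
      Matrix.smul_mulVec, ← Finset.smul_sum]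
    congr 1
    -- expand exp (t • N) applied to w
    rw [exp_eq_tsum ℝ]
    calc (∑' j : ℕ, ((j.factorial : ℝ))⁻¹ • (t • N) ^ j) *ᵥ w
        = mulVecCLM w (∑' j : ℕ, ((j.factorial : ℝ))⁻¹ • (t • N) ^ j) := rfl
      _ = ∑' j : ℕ, mulVecCLM w (((j.factorial : ℝ))⁻¹ • (t • N) ^ j) :=
          (mulVecCLM w).map_tsum (expSeries_summable' (𝕂 := ℝ) (t • N))
      _ = ∑ j ∈ Finset.range k,
            ((j.factorial : ℝ))⁻¹ • t ^ j • (N ^ j).mulVec w := by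
          rw [tsum_eq_sum (s := Finset.range k) ?h0]
          · refine Finset.sum_congr rfl fun j _ => ?_
            rw [_root_.map_smul, mulVecCLM_apply, smul_pow, Matrix.smul_mulVec]
          · intro j hj
            have hjk : k ≤ j := by
              by_contra hlt
              exact hj (Finset.mem_range.mpr (lt_of_not_ge hlt))
            rw [_root_.map_smul, mulVecCLM_apply, smul_pow, Matrix.smul_mulVec, hNj j hjk,
              smul_zero, smul_zero]
  have : Tendsto (fun t : ℝ => ∑ j ∈ Finset.range k,
      Complex.exp ((t:ℂ) * μ) • (((j.factorial : ℝ))⁻¹ • t ^ j • (N ^ j).mulVec w))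
      atTop (nhds 0) := by
    have h0 : (0 : Fin n → ℂ) = ∑ _j ∈ Finset.range k, 0 := by simp
    rw [h0]
    refine tendsto_finset_sum _ fun j _ => ?_
    set v : Fin n → ℂ := (N ^ j).mulVec w
    have hbound := (tendsto_pow_mul_exp_re_neg hμ j).const_mul (((j.factorial : ℝ))⁻¹ * ‖v‖)
    rw [mul_zero] at hbound
    refine squeeze_zero_norm' ?_ hbound
    filter_upwards [eventually_ge_atTop (0:ℝ)] with t ht
    rw [norm_smul, norm_smul, norm_smul, Complex.norm_exp]
    have hre : ((t:ℂ) * μ).re = μ.re * t := by simp [Complex.mul_re]; ring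
    rw [hre]
    simp only [Real.norm_eq_abs, abs_pow, abs_of_nonneg ht, norm_inv]
    rw [abs_of_nonneg (by positivity : (0:ℝ) ≤ (j.factorial : ℝ))]
    apply le_of_eq
    ring
  exact (Tendsto.congr (fun t => (hsplit t).symm) this)

/-- Solution formula via the matrix exponential, for `t ≥ 0`. -/
lemma solution_eq_exp {n : ℕ} (B : Matrix (Fin n) (Fin n) ℂ) (y : ℝ → Fin n → ℂ)
    (hy : ∀ t, HasDerivAt y (B.mulVec (y t)) t) {t : ℝ} (ht : 0 ≤ t) :
    y t = (exp (t • B)).mulVec (y 0) := by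
  set g : ℝ → Fin n → ℂ := fun u => (exp (u • B)).mulVec (y 0) with hg
  have hgderiv : ∀ u, HasDerivAt g (B.mulVec (g u)) u := by
    intro u
    have h1 := hasDerivAt_exp_smul_const' (𝕂 := ℝ) B u
    have h2 := ((mulVecCLM (y 0)).hasFDerivAt).comp_hasDerivAt u h1
    exact h2.congr_deriv (by show _ = B *ᵥ (exp (u • B) *ᵥ y 0); rw [Matrix.mulVec_mulVec]; rfl)
  set L : (Fin n → ℂ) →L[ℝ] (Fin n → ℂ) :=
    LinearMap.toContinuousLinearMap ((Matrix.mulVecLin B).restrictScalars ℝ) with hL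
  have key : Set.EqOn y g (Set.Icc 0 t) := by
    refine ODE_solution_unique (v := fun _ z => B.mulVec z) (K := ‖L‖₊) (a := 0) (b := t)
      (fun _ => ?_) ?_ ?_ ?_ ?_ ?_
    · exact L.lipschitz
    · exact fun u _ => (hy u).continuousAt.continuousWithinAt
    · exact fun u _ => (hy u).hasDerivWithinAt
    · exact fun u _ => (hgderiv u).continuousAt.continuousWithinAt
    · exact fun u _ => (hgderiv u).hasDerivWithinAt
    · simp [hg, exp_zero]
  exact key ⟨ht, le_refl t⟩

/-- Solutions of a linear ODE with Hurwitz (complex) matrix tend to zero. -/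
lemma tendsto_solution_zero {n : ℕ} (B : Matrix (Fin n) (Fin n) ℂ)
    (hB : ∀ μ ∈ spectrum ℂ B, μ.re < 0) (y : ℝ → Fin n → ℂ)
    (hy : ∀ t, HasDerivAt y (B.mulVec (y t)) t) :
    Tendsto y atTop (nhds 0) := by
  set S : Submodule ℂ (Fin n → ℂ) :=
    { carrier := {w | Tendsto (fun t : ℝ => (exp (t • B)).mulVec w) atTop (nhds 0)}
      add_mem' := by
        intro a b ha hb
        have := ha.add hb
        rw [add_zero] at this
        refine this.congr fun t => ?_
        rw [Matrix.mulVec_add]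
      zero_mem' := by
        refine tendsto_const_nhds.congr fun t => ?_
        rw [Matrix.mulVec_zero]
      smul_mem' := by
        intro c w hw
        have := hw.const_smul c
        rw [smul_zero] at this
        refine this.congr fun t => ?_
        rw [Matrix.mulVec_smul] } with hS
  have htop : (⊤ : Submodule ℂ (Fin n → ℂ)) ≤ S := by
    rw [← Module.End.iSup_maxGenEigenspace_eq_top (Matrix.toLinAlgEquiv' B)]
    refine iSup_le fun μ => ?_
    intro w hw
    by_cases hw0 : w = 0
    · exact hw0 ▸ S.zero_mem
    · have hμspec : μ ∈ spectrum ℂ B := by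
        obtain ⟨k, hk⟩ := (Module.End.mem_maxGenEigenspace _ _ _).mp hw
        have hk0 : k ≠ 0 := by
          rintro rfl
          rw [pow_zero, Module.End.one_apply] at hk
          exact hw0 hk
        have h1 : Module.End.HasEigenvalue (Matrix.toLinAlgEquiv' B) μ := by
          refine Module.End.hasEigenvalue_of_hasGenEigenvalue (k := k) ?_
          rw [Module.End.HasGenEigenvalue, Module.End.HasUnifEigenvalue]
          refine Submodule.ne_bot_iff _ |>.mpr ⟨w, ?_, hw0⟩
          rw [Module.End.mem_genEigenspace_nat]
          exact hk
        rw [Module.End.hasEigenvalue_iff_mem_spectrum] at h1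
        rwa [AlgEquiv.spectrum_eq] at h1
      exact tendsto_expMat_mulVec_genEig B (hB μ hμspec) hw
  have hy0 : Tendsto (fun t : ℝ => (exp (t • B)).mulVec (y 0)) atTop (nhds 0) :=
    htop (Submodule.mem_top (x := y 0))
  refine hy0.congr' ?_
  filter_upwards [eventually_ge_atTop (0:ℝ)] with t ht
  exact (solution_eq_exp B y hy ht).symm

lemma map_complex_mulVec {a b : ℕ} (M : Matrix (Fin a) (Fin b) ℝ) (v : Fin b → ℝ) :
    (M.map (algebraMap ℝ ℂ)).mulVec (fun j => ((v j : ℝ) : ℂ))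
      = fun i => ((M.mulVec v i : ℝ) : ℂ) := by
  funext i
  simp only [Matrix.mulVec, dotProduct, Matrix.map_apply]
  push_cast
  rfl

/-- Real solutions of a linear ODE with Hurwitz matrix tend to zero. -/
lemma tendsto_solution_zero_real {n : ℕ} (A : Matrix (Fin n) (Fin n) ℝ)
    (hA : ∀ μ ∈ spectrum ℂ (A.map (algebraMap ℝ ℂ)), μ.re < 0)
    (x : ℝ → Fin n → ℝ) (hx : ∀ t, HasDerivAt x (A.mulVec (x t)) t) :
    Tendsto x atTop (nhds 0) := by
  set y : ℝ → Fin n → ℂ := fun t i => ((x t i : ℝ) : ℂ) with hy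
  have hyderiv : ∀ t, HasDerivAt y ((A.map (algebraMap ℝ ℂ)).mulVec (y t)) t := by
    intro t
    have hcomp : ∀ i : Fin n,
        HasDerivAt (fun u => y u i) (((A.mulVec (x t) i : ℝ) : ℂ)) t := by
      intro i
      have h1 : HasDerivAt (fun u => x u i) (A.mulVec (x t) i) t :=
        (hasDerivAt_pi.mp (hx t)) i
      exact Complex.ofRealCLM.hasFDerivAt.comp_hasDerivAt t h1
    have := hasDerivAt_pi.mpr hcomp
    rwa [show (fun i => ((A.mulVec (x t) i : ℝ) : ℂ))
      = (A.map (algebraMap ℝ ℂ)).mulVec (y t) from (map_complex_mulVec A (x t)).symm] at this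
  have hy0 : Tendsto y atTop (nhds 0) :=
    tendsto_solution_zero _ hA y hyderiv
  rw [tendsto_pi_nhds]
  intro i
  have hyi : Tendsto (fun t => y t i) atTop (nhds 0) := by
    rw [tendsto_pi_nhds] at hy0
    exact hy0 i
  have := (Complex.continuous_re.tendsto 0).comp hyi
  simpa [hy, Function.comp_def] using this

/-- A real square matrix is Hurwitz if every (complex) eigenvalue has negative real part. -/
def Hurwitz {n : ℕ} (M : Matrix (Fin n) (Fin n) ℝ) : Prop :=
  ∀ μ ∈ spectrum ℂ (M.map (algebraMap ℝ ℂ)), μ.re < 0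

theorem sliding_motion_equivalent_injection {np p q : ℕ}
    (A₁₁ : Matrix (Fin np) (Fin np) ℝ) (A₂₁ : Matrix (Fin p) (Fin np) ℝ)
    (A₂₂s : Matrix (Fin p) (Fin p) ℝ) (D₂ : Matrix (Fin p) (Fin q) ℝ)
    (fbar : ℝ → Fin q → ℝ) (ν : ℝ → Fin p → ℝ)
    (e₁ : ℝ → Fin np → ℝ) (ey : ℝ → Fin p → ℝ) (t₀ : ℝ)
    (he₁ : ∀ t, HasDerivAt e₁ (A₁₁.mulVec (e₁ t)) t)
    (hey : ∀ t, HasDerivAt ey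
      (A₂₁.mulVec (e₁ t) + A₂₂s.mulVec (ey t) + ν t - D₂.mulVec (fbar t)) t)
    (hslide : ∀ t, t₀ ≤ t → ey t = 0 ∧ HasDerivAt ey 0 t) :
    (∀ t, t₀ ≤ t → ν t = D₂.mulVec (fbar t) - A₂₁.mulVec (e₁ t))
    ∧ (Hurwitz A₁₁ →
        Filter.Tendsto e₁ Filter.atTop (nhds 0)
        ∧ Filter.Tendsto (fun t => ν t - D₂.mulVec (fbar t))
            Filter.atTop (nhds 0)) := by
  have hpart1 : ∀ t, t₀ ≤ t → ν t = D₂.mulVec (fbar t) - A₂₁.mulVec (e₁ t) := by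
    intro t ht
    obtain ⟨hey0, heyd⟩ := hslide t ht
    have huniq := (hey t).unique heyd
    rw [hey0, Matrix.mulVec_zero, add_zero] at huniq
    have h2 : A₂₁.mulVec (e₁ t) + ν t = D₂.mulVec (fbar t) := sub_eq_zero.mp huniq
    rw [← h2]
    abel
  refine ⟨hpart1, fun hH => ?_⟩
  have he1tend : Tendsto e₁ atTop (nhds 0) :=
    tendsto_solution_zero_real A₁₁ hH e₁ he₁
  refine ⟨he1tend, ?_⟩
  have hmul : Tendsto (fun t => A₂₁.mulVec (e₁ t)) atTop (nhds 0) := by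
    set L : (Fin np → ℝ) →L[ℝ] (Fin p → ℝ) :=
      LinearMap.toContinuousLinearMap (Matrix.mulVecLin A₂₁) with hL
    have := (L.continuous.tendsto 0).comp he1tend
    simpa [hL, map_zero, Function.comp_def] using this
  have hneg : Tendsto (fun t => -(A₂₁.mulVec (e₁ t))) atTop (nhds 0) := by
    have := hmul.neg
    rwa [neg_zero] at this
  refine hneg.congr' ?_
  filter_upwards [eventually_ge_atTop t₀] with t ht
  rw [hpart1 t ht]
  abel
end

section
/- Let P₂, Q₂ be symmetric positive definite p×p matrices with P₂ A₂₂ˢ + (A₂₂ˢ)ᵀ P₂ = −Q₂, and suppose ν(t) = −ρ ‖D₂‖ P₂ e_y(t)/‖P₂ e_y(t)‖ whenever e_y(t) ≠ 0, with ρ > ‖f̄(t)‖ for all t. Then along the dynamics ė_y = A₂₂ˢ e_y + ν − D₂ f̄ (with A₂₁ e₁ ≡ 0), the function V(t) = e_y(t)ᵀ P₂ e_y(t) satisfies V̇(t) ≤ −e_yᵀ Q₂ e_y − 2(ρ − ‖f̄(t)‖)‖D₂‖·‖P₂ e_y(t)‖ ≤ 0, so every sublevel set {v : vᵀ P₂ v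 ≤ α} is forward-invariant. -/
open Matrix

/-- Euclidean norm of a vector. -/
noncomputable def enorm {n : ℕ} (v : Fin n → ℝ) : ℝ := Real.sqrt (∑ i, v i ^ 2)

/-- Spectral (Euclidean-induced operator) norm of a matrix. -/
noncomputable def opNorm {m n : ℕ} (M : Matrix (Fin m) (Fin n) ℝ) : ℝ :=
  sSup {c | ∃ v : Fin n → ℝ, _root_.enorm v ≤ 1 ∧ c = _root_.enorm (M.mulVec v)}

lemma enorm_nonneg'_s14 {n : ℕ} (v : Fin n → ℝ) : 0 ≤ _root_.enorm v := Real.sqrt_nonneg _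

lemma enorm_zero' {n : ℕ} : _root_.enorm (0 : Fin n → ℝ) = 0 := by simp [_root_.enorm]

lemma enorm_neg' {n : ℕ} (v : Fin n → ℝ) : _root_.enorm (-v) = _root_.enorm v := by
  simp [_root_.enorm]

lemma enorm_smul' {n : ℕ} (c : ℝ) (v : Fin n → ℝ) : _root_.enorm (c • v) = |c| * _root_.enorm v := by
  unfold _root_.enorm
  simp only [Pi.smul_apply, smul_eq_mul, mul_pow, ← Finset.mul_sum]
  rw [Real.sqrt_mul (sq_nonneg c), Real.sqrt_sq_eq_abs]

lemma dot_self_eq_enorm_sq {n : ℕ} (v : Fin n → ℝ) : dotProduct v v = _root_.enorm v ^ 2 := by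
  unfold _root_.enorm
  rw [Real.sq_sqrt (by positivity)]
  simp [dotProduct, sq]

lemma enorm_pos'' {n : ℕ} {v : Fin n → ℝ} (hv : v ≠ 0) : 0 < _root_.enorm v := by
  obtain ⟨i, hi⟩ := Function.ne_iff.mp hv
  have : (0:ℝ) < ∑ j, v j ^ 2 :=
    Finset.sum_pos' (fun j _ => sq_nonneg _) ⟨i, Finset.mem_univ i, lt_of_le_of_ne (sq_nonneg _) (Ne.symm (pow_ne_zero _ hi))⟩
  exact Real.sqrt_pos.mpr this

lemma dot_le_enorm {n : ℕ} (v w : Fin n → ℝ) : dotProduct v w ≤ _root_.enorm v * _root_.enorm w := by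
  have h := Finset.sum_mul_sq_le_sq_mul_sq Finset.univ v w
  unfold _root_.enorm
  rw [← Real.sqrt_mul (by positivity)]
  calc dotProduct v w ≤ |dotProduct v w| := le_abs_self _
    _ = Real.sqrt ((∑ i, v i * w i) ^ 2) := by
        rw [Real.sqrt_sq_eq_abs]; rfl
    _ ≤ _ := Real.sqrt_le_sqrt h

lemma opNorm_bddAbove {m n : ℕ} (M : Matrix (Fin m) (Fin n) ℝ) :
    BddAbove {c | ∃ v : Fin n → ℝ, _root_.enorm v ≤ 1 ∧ c = _root_.enorm (M.mulVec v)} := by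
  refine ⟨Real.sqrt (∑ i, ∑ j, M i j ^ 2), ?_⟩
  rintro c ⟨v, hv, rfl⟩
  unfold _root_.enorm at hv ⊢
  apply Real.sqrt_le_sqrt
  have hv2 : ∑ j, v j ^ 2 ≤ 1 := by
    have h0 : (0:ℝ) ≤ ∑ j, v j ^ 2 := by positivity
    nlinarith [Real.sq_sqrt h0, Real.sqrt_nonneg (∑ j, v j ^ 2)]
  refine Finset.sum_le_sum fun i _ => ?_
  have hcs := Finset.sum_mul_sq_le_sq_mul_sq Finset.univ (fun j => M i j) v
  have hMi : (0:ℝ) ≤ ∑ j, M i j ^ 2 := by positivity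
  calc (M.mulVec v i) ^ 2 = (∑ j, M i j * v j) ^ 2 := rfl
    _ ≤ (∑ j, M i j ^ 2) * ∑ j, v j ^ 2 := hcs
    _ ≤ (∑ j, M i j ^ 2) * 1 := by nlinarith
    _ = ∑ j, M i j ^ 2 := mul_one _

lemma opNorm_nonneg' {m n : ℕ} (M : Matrix (Fin m) (Fin n) ℝ) : 0 ≤ opNorm M := by
  apply le_csSup (opNorm_bddAbove M)
  exact ⟨0, by simp [enorm_zero'], by simp [enorm_zero']⟩

lemma enorm_mulVec_le {m n : ℕ} (M : Matrix (Fin m) (Fin n) ℝ) (v : Fin n → ℝ) :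
    _root_.enorm (M.mulVec v) ≤ opNorm M * _root_.enorm v := by
  by_cases hv : v = 0
  · simp [hv, enorm_zero']
  · have hpos := enorm_pos'' hv
    have hmem : _root_.enorm (M.mulVec ((_root_.enorm v)⁻¹ • v)) ∈
        {c | ∃ u : Fin n → ℝ, _root_.enorm u ≤ 1 ∧ c = _root_.enorm (M.mulVec u)} := by
      refine ⟨(_root_.enorm v)⁻¹ • v, ?_, rfl⟩
      rw [enorm_smul', abs_of_nonneg (by positivity), inv_mul_cancel₀ hpos.ne']
    have hle := le_csSup (opNorm_bddAbove M) hmem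
    rw [Matrix.mulVec_smul, enorm_smul', abs_of_nonneg (by positivity)] at hle
    unfold opNorm
    have heq : _root_.enorm (M.mulVec v) = (_root_.enorm v)⁻¹ * _root_.enorm (M.mulVec v) * _root_.enorm v := by
      rw [mul_comm ((_root_.enorm v)⁻¹) (_root_.enorm (M.mulVec v)), mul_assoc,
        inv_mul_cancel₀ hpos.ne', mul_one]
    rw [heq]
    exact mul_le_mul_of_nonneg_right hle hpos.le

theorem sliding_mode_lyapunov_decrease {p q : ℕ}
    (A₂₂s P₂ Q₂ : Matrix (Fin p) (Fin p) ℝ)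
    (hP₂ : P₂.PosDef) (hQ₂ : Q₂.PosDef)
    (hLyap : P₂ * A₂₂s + A₂₂sᵀ * P₂ = -Q₂)
    (D₂ : Matrix (Fin p) (Fin q) ℝ) (ρ : ℝ)
    (fbar : ℝ → Fin q → ℝ) (hρ : ∀ t, _root_.enorm (fbar t) < ρ)
    (ν : ℝ → Fin p → ℝ) (ey : ℝ → Fin p → ℝ)
    (hν : ∀ t, ey t ≠ 0 →
      ν t = (-(ρ * opNorm D₂ / _root_.enorm (P₂.mulVec (ey t)))) • P₂.mulVec (ey t))
    (hν0 : ∀ t, ey t = 0 → ν t = 0)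
    (hey : ∀ t, HasDerivAt ey
      (A₂₂s.mulVec (ey t) + ν t - D₂.mulVec (fbar t)) t) :
    (∀ t,
      deriv (fun s => dotProduct (ey s) (P₂.mulVec (ey s))) t ≤
        -dotProduct (ey t) (Q₂.mulVec (ey t))
          - 2 * (ρ - _root_.enorm (fbar t)) * opNorm D₂ * _root_.enorm (P₂.mulVec (ey t))
      ∧ deriv (fun s => dotProduct (ey s) (P₂.mulVec (ey s))) t ≤ 0)
    ∧ (∀ α : ℝ, dotProduct (ey 0) (P₂.mulVec (ey 0)) ≤ α →
        ∀ t, 0 ≤ t → dotProduct (ey t) (P₂.mulVec (ey t)) ≤ α) := by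
  set e' : ℝ → Fin p → ℝ := fun t => A₂₂s.mulVec (ey t) + ν t - D₂.mulVec (fbar t) with he'
  have hPsym : P₂ᵀ = P₂ := by
    have := hP₂.1
    rw [Matrix.IsHermitian, Matrix.conjTranspose_eq_transpose_of_trivial] at this; exact this
  -- derivative of V
  have hV : ∀ t, HasDerivAt (fun s => dotProduct (ey s) (P₂.mulVec (ey s)))
      (2 * dotProduct (P₂.mulVec (ey t)) (e' t)) t := by
    intro t
    have h1 : ∀ i, HasDerivAt (fun s => ey s i) (e' t i) t :=
      fun i => hasDerivAt_pi.1 (hey t) i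
    have key : HasDerivAt (fun s => ∑ i, ey s i * ∑ j, P₂ i j * ey s j)
        (∑ i, (e' t i * ∑ j, P₂ i j * ey t j + ey t i * ∑ j, P₂ i j * e' t j)) t :=
      HasDerivAt.fun_sum fun i _ =>
        (h1 i).mul (HasDerivAt.fun_sum fun j _ => (h1 j).const_mul _)
    have hfun : (fun s => dotProduct (ey s) (P₂.mulVec (ey s)))
        = fun s => ∑ i, ey s i * ∑ j, P₂ i j * ey s j := by
      funext s; simp [dotProduct, Matrix.mulVec]
    rw [hfun]
    convert key using 1
    have h2 : dotProduct (P₂.mulVec (ey t)) (e' t) = dotProduct (e' t) (P₂.mulVec (ey t)) :=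
      dotProduct_comm _ _
    have h3 : dotProduct (e' t) (P₂.mulVec (ey t)) = ∑ i, e' t i * ∑ j, P₂ i j * ey t j := by
      simp [dotProduct, Matrix.mulVec]
    have h4 : dotProduct (ey t) (P₂.mulVec (e' t)) = ∑ i, ey t i * ∑ j, P₂ i j * e' t j := by
      simp [dotProduct, Matrix.mulVec]
    have h5 : dotProduct (ey t) (P₂.mulVec (e' t)) = dotProduct (P₂.mulVec (ey t)) (e' t) := by
      rw [dotProduct_mulVec, ← Matrix.mulVec_transpose, hPsym]
    rw [Finset.sum_add_distrib, ← h3, ← h4, h5, ← h2]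
    ring
  -- key bound on derivative value
  have hbound : ∀ t, 2 * dotProduct (P₂.mulVec (ey t)) (e' t) ≤
      -dotProduct (ey t) (Q₂.mulVec (ey t))
        - 2 * (ρ - _root_.enorm (fbar t)) * opNorm D₂ * _root_.enorm (P₂.mulVec (ey t)) := by
    intro t
    set S := P₂.mulVec (ey t) with hS
    have hdot : dotProduct S (e' t) =
        dotProduct S (A₂₂s.mulVec (ey t)) + dotProduct S (ν t)
          - dotProduct S (D₂.mulVec (fbar t)) := by
      rw [he']
      simp [dotProduct_add, dotProduct_sub]
    -- Lyapunov term
    have hA : 2 * dotProduct S (A₂₂s.mulVec (ey t)) = -dotProduct (ey t) (Q₂.mulVec (ey t)) := by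
      have h1 : dotProduct (ey t) ((P₂ * A₂₂s).mulVec (ey t))
          = dotProduct S (A₂₂s.mulVec (ey t)) := by
        rw [← Matrix.mulVec_mulVec, dotProduct_mulVec, ← Matrix.mulVec_transpose, hPsym]
      have h2 : dotProduct (ey t) ((A₂₂sᵀ * P₂).mulVec (ey t))
          = dotProduct S (A₂₂s.mulVec (ey t)) := by
        rw [← Matrix.mulVec_mulVec, dotProduct_mulVec, ← Matrix.mulVec_transpose,
          Matrix.transpose_transpose, dotProduct_comm]
      have h3 : dotProduct (ey t) ((P₂ * A₂₂s + A₂₂sᵀ * P₂).mulVec (ey t))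
          = 2 * dotProduct S (A₂₂s.mulVec (ey t)) := by
        rw [Matrix.add_mulVec, dotProduct_add, h1, h2]; ring
      rw [hLyap] at h3
      rw [← h3, Matrix.neg_mulVec, dotProduct_neg]
    -- disturbance term
    have hDf : -dotProduct S (D₂.mulVec (fbar t)) ≤
        _root_.enorm S * (opNorm D₂ * _root_.enorm (fbar t)) := by
      have h1 : -dotProduct S (D₂.mulVec (fbar t)) = dotProduct (-S) (D₂.mulVec (fbar t)) := by
        simp [neg_dotProduct]
      rw [h1]
      calc dotProduct (-S) (D₂.mulVec (fbar t)) ≤ _root_.enorm (-S) * _root_.enorm (D₂.mulVec (fbar t)) :=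
            dot_le_enorm _ _
        _ = _root_.enorm S * _root_.enorm (D₂.mulVec (fbar t)) := by rw [enorm_neg']
        _ ≤ _root_.enorm S * (opNorm D₂ * _root_.enorm (fbar t)) := by
            exact mul_le_mul_of_nonneg_left (enorm_mulVec_le _ _) (enorm_nonneg'_s14 _)
    by_cases h0 : ey t = 0
    · have hS0 : S = 0 := by rw [hS, h0, Matrix.mulVec_zero]
      rw [hdot, hS0, h0]
      simp [enorm_zero', zero_dotProduct, dotProduct_zero]
    · -- ν term
      have hSne : S ≠ 0 := by
        intro hc
        have := hP₂.dotProduct_mulVec_pos h0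
        rw [show star (ey t) = ey t from rfl] at this
        rw [← hS] at this
        rw [hc, dotProduct_zero] at this
        exact lt_irrefl _ this
      have hSpos : 0 < _root_.enorm S := enorm_pos'' hSne
      have hν' : dotProduct S (ν t) = -(ρ * opNorm D₂) * _root_.enorm S := by
        rw [hν t h0, ← hS, dotProduct_smul, smul_eq_mul, dot_self_eq_enorm_sq]
        field_simp
      have hQ : 0 ≤ dotProduct (ey t) (Q₂.mulVec (ey t)) := by
        have := hQ₂.dotProduct_mulVec_pos h0
        exact le_of_lt this
      have hf := (hρ t).le
      have hfnn := enorm_nonneg'_s14 (fbar t)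
      have hDnn := opNorm_nonneg' D₂
      rw [hdot, hν']
      nlinarith [hDf, hSpos.le]
  have part1 : ∀ t,
      deriv (fun s => dotProduct (ey s) (P₂.mulVec (ey s))) t ≤
        -dotProduct (ey t) (Q₂.mulVec (ey t))
          - 2 * (ρ - _root_.enorm (fbar t)) * opNorm D₂ * _root_.enorm (P₂.mulVec (ey t))
      ∧ deriv (fun s => dotProduct (ey s) (P₂.mulVec (ey s))) t ≤ 0 := by
    intro t
    have hd := (hV t).deriv
    constructor
    · rw [hd]; exact hbound t
    · rw [hd]
      have hQ : 0 ≤ dotProduct (ey t) (Q₂.mulVec (ey t)) := by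
        by_cases h0 : ey t = 0
        · rw [h0]; simp
        · exact (hQ₂.dotProduct_mulVec_pos h0).le
      have hf := (hρ t).le
      have hDnn := opNorm_nonneg' D₂
      have hSnn := enorm_nonneg'_s14 (P₂.mulVec (ey t))
      have hfnn := enorm_nonneg'_s14 (fbar t)
      have := hbound t
      nlinarith [mul_nonneg (mul_nonneg (sub_nonneg.2 hf) hDnn) hSnn]
  refine ⟨part1, ?_⟩
  intro α hα t ht
  have hmono : Antitone (fun s => dotProduct (ey s) (P₂.mulVec (ey s))) := by
    apply antitone_of_deriv_nonpos
    · exact fun s => (hV s).differentiableAt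
    · exact fun s => (part1 s).2
  exact le_trans (hmono ht) hα
end
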